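/- For all positive integers a, b, d with a ≥ d(b+d), the inequality (1/a) ∑_{q=2}^{d} C(a+q-1, q) ≥ (d/b) ∑_{q=2}^{d} C(b+q-1, q) holds (equivalently, b ∑_{q=2}^{d} C(a+q-1, q) ≥ a d ∑_{q=2}^{d} C(b+q-1, q)). -/

import Mathlib

theorem binom_sum_ratio_ge (a b d : ℕ) (ha : 0 < a) (hb : 0 < b) (hd : 0 < d)
    (h : d * (b + d) ≤ a) :
    a * d * ∑ q ∈ Finset.Icc 2 d, Nat.choose (b + q - 1) q ≤
      b * ∑ q ∈ Finset.Icc 2 d, Nat.choose (a + q - 1) q := by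
  have hba : b ≤ a := le_trans (by nlinarith) h
  -- key ascFactorial inequality
  have key : ∀ q, 2 ≤ q → q ≤ d →
      a * d * b.ascFactorial q ≤ b * a.ascFactorial q := by
    intro q h2 hqd
    induction q with
    | zero => omega
    | succ n ih =>
      rcases Nat.lt_or_ge n 2 with hn | hn
      · interval_cases n
        · omega
        · -- q = 2
          rw [Nat.ascFactorial_succ, Nat.ascFactorial_succ, Nat.ascFactorial_zero,
            Nat.ascFactorial_succ, Nat.ascFactorial_succ, Nat.ascFactorial_zero]
          have hd2 : 2 ≤ d := hqd
          have hdb : d * (b + 1) ≤ a := by nlinarith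
          calc a * d * ((b + 1) * ((b + 0) * 1)) = (a * b) * (d * (b + 1)) := by ring
            _ ≤ (a * b) * (a + 1) := Nat.mul_le_mul_left _ (by omega)
            _ = b * ((a + 1) * ((a + 0) * 1)) := by ring
      · have hnd : n ≤ d := le_trans (Nat.le_succ n) hqd
        have ihn := ih hn hnd
        rw [Nat.ascFactorial_succ, Nat.ascFactorial_succ]
        calc a * d * ((b + n) * b.ascFactorial n)
            = (b + n) * (a * d * b.ascFactorial n) := by ring
          _ ≤ (a + n) * (b * a.ascFactorial n) := by
              exact Nat.mul_le_mul (by omega) ihn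
          _ = b * ((a + n) * a.ascFactorial n) := by ring
  have term : ∀ q ∈ Finset.Icc 2 d,
      a * d * Nat.choose (b + q - 1) q ≤ b * Nat.choose (a + q - 1) q := by
    intro q hq
    rw [Finset.mem_Icc] at hq
    have hk := key q hq.1 hq.2
    rw [Nat.ascFactorial_eq_factorial_mul_choose', Nat.ascFactorial_eq_factorial_mul_choose'] at hk
    have : q.factorial * (a * d * Nat.choose (b + q - 1) q) ≤ q.factorial * (b * Nat.choose (a + q - 1) q) := by
      calc q.factorial * (a * d * Nat.choose (b + q - 1) q)
          = a * d * (q.factorial * Nat.choose (b + q - 1) q) := by ring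
        _ ≤ b * (q.factorial * Nat.choose (a + q - 1) q) := hk
        _ = q.factorial * (b * Nat.choose (a + q - 1) q) := by ring
    exact Nat.le_of_mul_le_mul_left this q.factorial_pos
  rw [Finset.mul_sum, Finset.mul_sum]
  exact Finset.sum_le_sum term
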